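/- arXiv:1103.4173 — 2 statements merged into one kernel-verified Lean document; each statement's English description precedes it below -/
import Mathlib

section
/- Let (R, m, k) be a reduced F-finite Noetherian local ring of characteristic p > 0 and I_e = { r ∈ R : φ(F^e_* r) ∈ m for all φ ∈ Hom_R(F^e_* R, R) }. Then for every e ∈ ℕ, I_e^[p] ⊆ I_{e+1}, i.e., for r ∈ I_e one has r^p ∈ I_{e+1}. -/
set_option linter.unusedVariables false

open Filter IsLocalRing

/-- `I^[q]` : the ideal generated by the `q`-th powers of the elements of `I`. -/
def Ideal.bracketPow {R : Type*} [CommSemiring R] (I : Ideal R) (q : ℕ) : Ideal R :=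
  Ideal.span ((fun x => x ^ q) '' (I : Set R))

/-- The length of the `R`-module `M` (as a natural number; junk value when infinite),
computed as the Krull dimension of the lattice of submodules of `M`. -/
noncomputable def mlength (R M : Type*) [Ring R] [AddCommGroup M] [Module R M] : ℕ :=
  ((Order.krullDim (Submodule R M)).unbotD 0).toNat

/-- The length of `(R ⧸ I) ⊗_R M`. -/
noncomputable def lenTensor (R : Type*) [CommRing R] (M : Type*) [AddCommGroup M] [Module R M]
    (I : Ideal R) : ℕ :=
  mlength R (TensorProduct R (R ⧸ I) M)

/-- Type synonym: `M` viewed as an `R`-module via the `e`-th iterate of Frobenius,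
i.e. `F^e_* M`. -/
def FrobMod (R : Type*) (p e : ℕ) (M : Type*) : Type _ := M

/-- `F^e_* m`, the element of `F^e_* M` corresponding to `m : M`. -/
def FrobMod.of (R : Type*) (p e : ℕ) {M : Type*} (m : M) : FrobMod R p e M := m

instance FrobMod.instAddCommGroup {R M : Type*} {p e : ℕ} [AddCommGroup M] :
    AddCommGroup (FrobMod R p e M) := inferInstanceAs (AddCommGroup M)

noncomputable instance FrobMod.instModule {R : Type*} [CommSemiring R] {p e : ℕ} [ExpChar R p]
    {M : Type*} [AddCommGroup M] [Module R M] : Module R (FrobMod R p e M) :=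
  Module.compHom M (iterateFrobenius R p e)

/-- `M` has a free direct summand (isomorphic to `R`). -/
def HasFreeDirectSummand (R M : Type*) [CommRing R] [AddCommGroup M] [Module R M] : Prop :=
  ∃ N N' : Submodule R M, IsCompl N N' ∧ Nonempty (N ≃ₗ[R] R)

/-- `R` is `F`-finite: the Frobenius endomorphism is a finite ring homomorphism,
i.e. `F_* R` is a finitely generated `R`-module. -/
def FFinite (R : Type*) [CommRing R] (p : ℕ) [ExpChar R p] : Prop :=
  RingHom.Finite (frobenius R p)

/-- The set `I_e = { r : R | φ (F^e_* r) ∈ 𝔪 for all φ ∈ Hom_R (F^e_* R, R) }`. -/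
def splittingSet (R : Type*) [CommRing R] [IsLocalRing R] (p e : ℕ) [ExpChar R p] : Set R :=
  {r : R | ∀ φ : FrobMod R p e R →ₗ[R] R, φ (FrobMod.of R p e r) ∈ maximalIdeal R}

/-- `α = α(R) = log_p [k : k^p]`, encoded as `[k^{1/p} : k] = p ^ α` for the residue field `k`. -/
def IsAlphaOf (R : Type*) [CommRing R] [IsLocalRing R] (p : ℕ)
    [ExpChar (ResidueField R) p] (α : ℕ) : Prop :=
  Module.finrank (ResidueField R) (FrobMod (ResidueField R) p 1 (ResidueField R)) = p ^ α

/-- `b` records, for each `e`, a direct sum decomposition `F^e_* M ≅ R^{b e} ⊕ N_e`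
where `N_e` has no free direct summand; i.e. `b e` is the `e`-th Frobenius splitting
number of `M`. -/
def IsFrobSplittingNumbersOf (R : Type*) [CommRing R] (p : ℕ) [ExpChar R p]
    (M : Type*) [AddCommGroup M] [Module R M] (b : ℕ → ℕ) : Prop :=
  ∀ e : ℕ, ∃ Fe Ne : Submodule R (FrobMod R p e M),
    IsCompl Fe Ne ∧ Nonempty (Fe ≃ₗ[R] (Fin (b e) → R)) ∧ ¬ HasFreeDirectSummand R Ne

/-- `a e` is the `e`-th Frobenius splitting number of `R`:
`F^e_* R ≅ R^{a e} ⊕ M_e` with `M_e` having no free direct summand. -/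
def IsFrobSplittingNumbers (R : Type*) [CommRing R] (p : ℕ) [ExpChar R p] (a : ℕ → ℕ) : Prop :=
  IsFrobSplittingNumbersOf R p R a

/-- A local ring is regular if its maximal ideal is generated by `dim R` elements. -/
def RegularLocal (R : Type*) [CommRing R] [IsLocalRing R] : Prop :=
  ∃ s : Finset R, Ideal.span (s : Set R) = maximalIdeal R ∧
    (s.card : WithBot (WithTop ℕ)) = ringKrullDim R

/-- A local ring is Cohen–Macaulay if there is a regular sequence in the maximal ideal
of length `dim R`. -/
def CohenMacaulayLocal (R : Type*) [CommRing R] [IsLocalRing R] : Prop :=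
  ∃ rs : List R, (∀ r ∈ rs, r ∈ maximalIdeal R) ∧ RingTheory.Sequence.IsRegular R rs ∧
    (rs.length : WithBot (WithTop ℕ)) = ringKrullDim R

/-- `R` is strongly `F`-regular: for every `c` not in any minimal prime there are `e`
and `φ : F^e_* R → R` with `φ (F^e_* c) = 1`. -/
def StronglyFRegular (R : Type*) [CommRing R] (p : ℕ) [ExpChar R p] : Prop :=
  ∀ c : R, (∀ P ∈ minimalPrimes R, c ∉ P) →
    ∃ (e : ℕ) (φ : FrobMod R p e R →ₗ[R] R), φ (FrobMod.of R p e c) = 1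

/-- `I_e^{[p]} ⊆ I_{e+1}`, i.e. `r ∈ I_e → r^p ∈ I_{e+1}`. -/
theorem statement6 {R : Type*} [CommRing R] [IsNoetherianRing R] [IsLocalRing R] [IsReduced R]
    {p : ℕ} [Fact p.Prime] [CharP R p] (hfin : FFinite R p) (e : ℕ) :
    ∀ r ∈ splittingSet R p e, r ^ p ∈ splittingSet R p (e + 1) := by
  intro r hr φ
  let u : FrobMod R p e R → R := fun x => x
  let ψ : FrobMod R p e R →ₗ[R] R :=
    { toFun := fun x => φ (FrobMod.of R p (e + 1) (u x ^ p))
      map_add' := fun x y => by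
        have h : u (x + y) = u x + u y := rfl
        have : u (x + y) ^ p = u x ^ p + u y ^ p := by rw [h, add_pow_char]
        show φ (FrobMod.of R p (e + 1) (u (x + y) ^ p)) = _
        rw [this]
        exact φ.map_add _ _
      map_smul' := fun c x => by
        have h : u (c • x) = iterateFrobenius R p e c * u x := rfl
        show φ (FrobMod.of R p (e + 1) (u (c • x) ^ p)) =
          c • φ (FrobMod.of R p (e + 1) (u x ^ p))
        have key : u (c • x) ^ p = iterateFrobenius R p (e + 1) c * (u x ^ p) := by
          rw [h, mul_pow, iterateFrobenius_def, iterateFrobenius_def, ← pow_mul, pow_succ]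
        rw [key]
        have := φ.map_smul c (FrobMod.of R p (e + 1) (u x ^ p))
        have hsm : (c • FrobMod.of R p (e + 1) (u x ^ p) : FrobMod R p (e + 1) R)
            = FrobMod.of R p (e + 1) (iterateFrobenius R p (e + 1) c * (u x ^ p)) := rfl
        rw [hsm] at this
        simpa using this }
  exact hr ψ
end

section
/- Let (R, m, k) be a reduced F-finite Noetherian local ring of characteristic p > 0 and set P = ⋂_{e∈ℕ} I_e, where I_e = { r ∈ R : φ(F^e_* r) ∈ m for all φ ∈ Hom_R(F^e_* R, R) }. Then P is either a prime ideal of R or equal to R. (In particular, if c₁, c₂ ∉ P, then c₁c₂ ∉ P.) -/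
set_option linter.unusedVariables false

open Filter IsLocalRing

/-- Unwrap an element of `F^e_* M` back to `M`. -/
def FrobMod.un {R : Type*} {p e : ℕ} {M : Type*} (m : FrobMod R p e M) : M := m

lemma frob_smul {R : Type*} [CommRing R] {p : ℕ} [ExpChar R p] (e : ℕ) (r : R)
    (x : FrobMod R p e R) : r • x = FrobMod.of R p e (r ^ p ^ e * x.un) := by
  show iterateFrobenius R p e r * x.un = r ^ p ^ e * x.un
  rw [iterateFrobenius_def]

/-- the splitting prime `P = ⋂_e I_e` is prime or all of `R`. -/
theorem statement8 {R : Type*} [CommRing R] [IsNoetherianRing R] [IsLocalRing R] [IsReduced R]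
    {p : ℕ} [Fact p.Prime] [CharP R p] (hfin : FFinite R p)
    (P : Ideal R) (hP : (P : Set R) = ⋂ e : ℕ, splittingSet R p e) :
    P = ⊤ ∨ P.IsPrime := by
  haveI : ExpChar R p := ExpChar.prime Fact.out
  by_cases hT : P = ⊤
  · exact Or.inl hT
  right
  refine ⟨hT, ?_⟩
  intro x y hxy
  by_contra hcon
  push_neg at hcon
  obtain ⟨hx, hy⟩ := hcon
  have hmem : ∀ z : R, z ∈ P ↔ ∀ e : ℕ, z ∈ splittingSet R p e := by
    intro z
    rw [← SetLike.mem_coe, hP, Set.mem_iInter]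
  have hx' := (hmem x).not.mp hx
  have hy' := (hmem y).not.mp hy
  push_neg at hx' hy'
  obtain ⟨e, hxe⟩ := hx'
  obtain ⟨e', hye⟩ := hy'
  simp only [splittingSet, Set.mem_setOf_eq, not_forall] at hxe hye
  obtain ⟨φ₀, hφ₀⟩ := hxe
  obtain ⟨ψ, hψ⟩ := hye
  -- normalize φ₀ so that it sends x to 1
  have hu : IsUnit (φ₀ (FrobMod.of R p e x)) := by
    by_contra h
    exact hφ₀ (h : φ₀ (FrobMod.of R p e x) ∈ nonunits R)
  obtain ⟨u, hu⟩ := hu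
  set φ : FrobMod R p e R →ₗ[R] R := (↑u⁻¹ : R) • φ₀ with hφdef
  have hφx : φ (FrobMod.of R p e x) = 1 := by
    simp [hφdef, ← hu]
  -- build the composite linear map on F^{e+e'}
  set θ : FrobMod R p (e + e') R →ₗ[R] R :=
    { toFun := fun z => ψ (FrobMod.of R p e' (φ (FrobMod.of R p e (y ^ (p ^ e - 1) * z.un)))),
      map_add' := by
        intro a b
        have hab : (a + b).un = a.un + b.un := rfl
        show ψ (FrobMod.of R p e' (φ (FrobMod.of R p e (y ^ (p ^ e - 1) * (a + b).un)))) = _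
        rw [hab, mul_add]
        have h1 : FrobMod.of R p e (y ^ (p ^ e - 1) * a.un + y ^ (p ^ e - 1) * b.un)
            = FrobMod.of R p e (y ^ (p ^ e - 1) * a.un) +
              FrobMod.of R p e (y ^ (p ^ e - 1) * b.un) := rfl
        rw [h1, map_add]
        have h2 : FrobMod.of R p e' (φ (FrobMod.of R p e (y ^ (p ^ e - 1) * a.un)) +
              φ (FrobMod.of R p e (y ^ (p ^ e - 1) * b.un)))
            = FrobMod.of R p e' (φ (FrobMod.of R p e (y ^ (p ^ e - 1) * a.un))) +
              FrobMod.of R p e' (φ (FrobMod.of R p e (y ^ (p ^ e - 1) * b.un))) := rfl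
        rw [h2, map_add]
      map_smul' := by
        intro r z
        show ψ (FrobMod.of R p e' (φ (FrobMod.of R p e (y ^ (p ^ e - 1) * (r • z).un))))
          = r • ψ (FrobMod.of R p e' (φ (FrobMod.of R p e (y ^ (p ^ e - 1) * z.un))))
        rw [frob_smul (e + e') r z]
        have key : FrobMod.of R p e (y ^ (p ^ e - 1) *
              (FrobMod.of R p (e + e') (r ^ p ^ (e + e') * z.un)).un)
            = (r ^ p ^ e') • FrobMod.of R p e (y ^ (p ^ e - 1) * z.un) := by
          rw [frob_smul e]
          show FrobMod.of R p e _ = FrobMod.of R p e _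
          unfold FrobMod.of FrobMod.un
          rw [pow_add, pow_mul']
          ring_nf
          exact mul_left_comm (G := R) _ _ _
        rw [key, map_smul]
        have key2 : FrobMod.of R p e' ((r ^ p ^ e') • φ (FrobMod.of R p e (y ^ (p ^ e - 1) * z.un)))
            = r • FrobMod.of R p e' (φ (FrobMod.of R p e (y ^ (p ^ e - 1) * z.un))) := by
          rw [frob_smul e']
          rfl
        rw [key2, map_smul] } with hθdef
  -- evaluate θ at x * y
  have hθxy : θ (FrobMod.of R p (e + e') (x * y)) = ψ (FrobMod.of R p e' y) := by
    show ψ (FrobMod.of R p e' (φ (FrobMod.of R p e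
        (y ^ (p ^ e - 1) * (FrobMod.of R p (e + e') (x * y)).un)))) = _
    have h1 : y ^ (p ^ e - 1) * (FrobMod.of R p (e + e') (x * y)).un = y ^ p ^ e * x := by
      show y ^ (p ^ e - 1) * (x * y) = y ^ p ^ e * x
      have hy1 : y ^ (p ^ e - 1) * y = y ^ p ^ e := by
        rw [← pow_succ]
        congr 1
        have : 0 < p ^ e := pow_pos (Fact.out : p.Prime).pos e
        omega
      rw [← hy1]; ring
    rw [h1]
    have h2 : FrobMod.of R p e (y ^ p ^ e * x) = y • FrobMod.of R p e x := by
      rw [frob_smul e]; rfl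
    rw [h2, map_smul, hφx]
    have h3 : FrobMod.of R p e' ((y : R) • (1 : R)) = FrobMod.of R p e' y := by
      unfold FrobMod.of; rw [smul_eq_mul, mul_one]
    rw [h3]
  -- contradiction: x * y ∈ P but θ (x*y) ∉ m
  have hfin2 := (hmem (x * y)).mp hxy (e + e') θ
  rw [hθxy] at hfin2
  exact hψ hfin2
end
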